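/- Let X be a real Hilbert space, C ⊆ X an open convex set, f : C → ℝ Fréchet-differentiable on C, and 0 ≤ γ ≤ 1. Then f is γ-quasiconvex on C if and only if for all x₁, x₂ ∈ C the implication holds: f(x₁) ≤ γ f(x₂) implies ⟨∇f(x₂), x₂ − x₁⟩ ≥ 0. -/

import Mathlib

open scoped RealInnerProductSpace
open Set

/-- For a Fréchet-differentiable functional `f` on an open convex set `C`
in a real Hilbert space and `0 ≤ γ ≤ 1`, `f` is `γ`-quasiconvex on `C` iff
`f x₁ ≤ γ f x₂` implies `⟪∇f x₂, x₂ - x₁⟫ ≥ 0` for all `x₁, x₂ ∈ C`. -/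
theorem gamma_quasiconvex_iff_gradient_condition
    {X : Type*} [NormedAddCommGroup X] [InnerProductSpace ℝ X] [CompleteSpace X]
    (C : Set X) (hCopen : IsOpen C) (hCconv : Convex ℝ C)
    (f : X → ℝ) (f' : X → X) (hf : ∀ x ∈ C, HasGradientAt f (f' x) x)
    (γ : ℝ) (hγ0 : 0 ≤ γ) (hγ1 : γ ≤ 1) :
    (∀ x₁ ∈ C, ∀ x₂ ∈ C, ∀ lam : ℝ, 0 < lam → lam < 1 →
        f x₁ ≤ γ * f x₂ → f (lam • x₁ + (1 - lam) • x₂) ≤ f x₂) ↔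
    (∀ x₁ ∈ C, ∀ x₂ ∈ C, f x₁ ≤ γ * f x₂ → ⟪f' x₂, x₂ - x₁⟫ ≥ 0) := by
  have hmem : ∀ x₁ ∈ C, ∀ x₂ ∈ C, ∀ t : ℝ, 0 ≤ t → t ≤ 1 → x₂ + t • (x₁ - x₂) ∈ C := by
    intro x₁ h1 x₂ h2 t ht0 ht1
    have := hCconv h2 h1 (by linarith : (0:ℝ) ≤ 1 - t) ht0 (by ring)
    convert this using 1
    module
  have hderiv : ∀ x₁ x₂ : X, ∀ t : ℝ, x₂ + t • (x₁ - x₂) ∈ C →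
      HasDerivAt (fun s : ℝ => f (x₂ + s • (x₁ - x₂)))
        ⟪f' (x₂ + t • (x₁ - x₂)), x₁ - x₂⟫ t := by
    intro x₁ x₂ t hxt
    have hL : HasDerivAt (fun s : ℝ => x₂ + s • (x₁ - x₂)) (x₁ - x₂) t := by
      simpa using ((hasDerivAt_id t).smul_const (x₁ - x₂)).const_add x₂
    have := (hf _ hxt).hasFDerivAt.comp_hasDerivAt t hL
    simpa [InnerProductSpace.toDual_apply_apply, Function.comp_def] using this
  constructor
  · -- quasiconvexity → gradient condition
    intro hq x₁ h1 x₂ h2 hle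
    set g : ℝ → ℝ := fun s => f (x₂ + s • (x₁ - x₂)) with hg
    have hd : HasDerivAt g ⟪f' x₂, x₁ - x₂⟫ 0 := by
      have := hderiv x₁ x₂ 0 (by simpa using h2)
      simpa using this
    have hdiff : Ioi (0:ℝ) \ {0} = Ioi 0 := by
      apply Set.diff_singleton_eq_self; simp
    have hslope : Filter.Tendsto (slope g 0) (nhdsWithin 0 (Ioi 0))
        (nhds ⟪f' x₂, x₁ - x₂⟫) := by
      have := (hd.hasDerivWithinAt (s := Ioi (0:ℝ)))
      rw [hasDerivWithinAt_iff_tendsto_slope, hdiff] at this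
      exact this
    have hev : ∀ᶠ t in nhdsWithin (0:ℝ) (Ioi 0), slope g 0 t ≤ 0 := by
      have hmemIoo : Ioo (0:ℝ) 1 ∈ nhdsWithin (0:ℝ) (Ioi 0) :=
        Ioo_mem_nhdsGT_of_mem (by norm_num : (0:ℝ) ∈ Ico 0 1)
      filter_upwards [hmemIoo] with t ht
      have hgt : g t ≤ g 0 := by
        have := hq x₁ h1 x₂ h2 t ht.1 ht.2 hle
        have hpt : t • x₁ + (1 - t) • x₂ = x₂ + t • (x₁ - x₂) := by module
        rw [hpt] at this
        simpa [hg] using this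
      have : slope g 0 t = (g t - g 0) / t := by simp [slope_def_field]
      rw [this]
      exact div_nonpos_of_nonpos_of_nonneg (by linarith) ht.1.le
    have hle0 : ⟪f' x₂, x₁ - x₂⟫ ≤ 0 := by
      refine le_of_tendsto hslope ?_
      exact hev
    have : ⟪f' x₂, x₂ - x₁⟫ = -⟪f' x₂, x₁ - x₂⟫ := by
      rw [show x₂ - x₁ = -(x₁ - x₂) by abel, inner_neg_right]
    rw [ge_iff_le, this]
    linarith
  · -- gradient condition → quasiconvexity
    intro hgc x₁ h1 x₂ h2 lam hl0 hl1 hle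
    set g : ℝ → ℝ := fun s => f (x₂ + s • (x₁ - x₂)) with hg
    have hpt : lam • x₁ + (1 - lam) • x₂ = x₂ + lam • (x₁ - x₂) := by module
    rw [hpt]
    by_contra hcon
    push_neg at hcon
    have hg0 : g 0 = f x₂ := by simp [hg]
    have hglam : g 0 < g lam := by rw [hg0]; exact hcon
    have hcont : ContinuousOn g (Icc 0 lam) := by
      intro t ht
      exact (hderiv x₁ x₂ t (hmem x₁ h1 x₂ h2 t ht.1 (le_trans ht.2 hl1.le))).continuousAt.continuousWithinAt
    set S : Set ℝ := {t | t ∈ Icc 0 lam ∧ g t ≤ g 0} with hS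
    have hS0 : (0:ℝ) ∈ S := ⟨⟨le_refl _, hl0.le⟩, le_refl _⟩
    have hSbdd : BddAbove S := ⟨lam, fun t ht => ht.1.2⟩
    have hSclosed : IsClosed S := by
      have : S = Icc 0 lam ∩ g ⁻¹' (Iic (g 0)) := by ext t; simp [hS, and_comm]
      rw [this]
      exact ContinuousOn.preimage_isClosed_of_isClosed hcont isClosed_Icc isClosed_Iic
    set t₀ : ℝ := sSup S with ht₀
    have ht₀S : t₀ ∈ S := hSclosed.csSup_mem ⟨0, hS0⟩ hSbdd
    have ht₀lam : t₀ < lam := lt_of_le_of_ne ht₀S.1.2 (by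
      intro h; exact absurd ht₀S.2 (by rw [h]; linarith))
    have ht₀0 : 0 ≤ t₀ := ht₀S.1.1
    -- on (t₀, lam), g t > g 0 and deriv g t ≤ 0
    have hderivle : ∀ t ∈ Ioo t₀ lam, deriv g t ≤ 0 := by
      intro t ht
      have htgt : g 0 < g t := by
        by_contra hge
        push_neg at hge
        have : t ∈ S := ⟨⟨le_trans ht₀0 ht.1.le, ht.2.le⟩, hge⟩
        exact absurd (le_csSup hSbdd this) (not_le.mpr ht.1)
      have htC : x₂ + t • (x₁ - x₂) ∈ C :=
        hmem x₁ h1 x₂ h2 t (le_trans ht₀0 ht.1.le) (by linarith [ht.2])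
      have hD := hderiv x₁ x₂ t htC
      have hle' : f x₁ ≤ γ * f (x₂ + t • (x₁ - x₂)) := by
        have : γ * f x₂ ≤ γ * g t := by
          apply mul_le_mul_of_nonneg_left _ hγ0
          rw [← hg0]; exact (le_of_lt htgt)
        calc f x₁ ≤ γ * f x₂ := hle
          _ ≤ γ * g t := this
          _ = γ * f (x₂ + t • (x₁ - x₂)) := rfl
      have hinner := hgc x₁ h1 _ htC hle'
      have hxt : x₂ + t • (x₁ - x₂) - x₁ = (t - 1) • (x₁ - x₂) := by module
      rw [hxt, real_inner_smul_right] at hinner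
      have hin2 : ⟪f' (x₂ + t • (x₁ - x₂)), x₁ - x₂⟫ ≤ 0 := by
        nlinarith [ht.2, hl1]
      rw [hD.deriv]
      exact hin2
    have hanti : AntitoneOn g (Icc t₀ lam) := by
      apply antitoneOn_of_deriv_nonpos (convex_Icc t₀ lam)
      · exact hcont.mono (Icc_subset_Icc ht₀0 (le_refl _))
      · intro t ht
        rw [interior_Icc] at ht
        exact ((hderiv x₁ x₂ t (hmem x₁ h1 x₂ h2 t (le_trans ht₀0 ht.1.le) (by linarith [ht.2]))).differentiableAt).differentiableWithinAt
      · intro t ht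
        rw [interior_Icc] at ht
        exact hderivle t ht
    have : g lam ≤ g t₀ :=
      hanti ⟨le_refl _, ht₀lam.le⟩ ⟨ht₀lam.le, le_refl _⟩ ht₀lam.le
    linarith [ht₀S.2]
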